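/- Assume τX = X. If A --f--> B --g--> C → A⟦1⟧ is a distinguished triangle in C, then f is X-monic if and only if g is X-epic. -/

import Mathlib

/-!
Common definitions: the ideal of morphisms factoring through a subcategory `X`
(given as a set of objects of `C`), `X`-monic and `X`-epic morphisms, left and
right `X`-approximations, additive subcategories closed under isomorphisms,
direct sums and direct summands, and the additive quotient category `C/X`
(realized via `CategoryTheory.Quotient` of the relation `xRel X`).
-/

open CategoryTheory Category Limits Pretriangulated

universe v u

namespace PaperStmt

variable {C : Type u} [Category.{v} C]

/-- `f` factors through an object of `X`. -/
def FactorsThru (X : Set C) {A B : C} (f : A ⟶ B) : Prop :=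
  ∃ (M : C) (g : A ⟶ M) (h : M ⟶ B), M ∈ X ∧ g ≫ h = f

/-- `f : A ⟶ B` is `X`-monic: the map `Hom(B, X') → Hom(A, X')`, `g ↦ g ∘ f`,
is surjective for every object `X'` of `X`. -/
def IsXMonic (X : Set C) {A B : C} (f : A ⟶ B) : Prop :=
  ∀ ⦃X' : C⦄, X' ∈ X → ∀ g : A ⟶ X', ∃ h : B ⟶ X', f ≫ h = g

/-- `f : A ⟶ B` is `X`-epic: the map `Hom(X', A) → Hom(X', B)`, `g ↦ f ∘ g`,
is surjective for every object `X'` of `X`. -/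
def IsXEpic (X : Set C) {A B : C} (f : A ⟶ B) : Prop :=
  ∀ ⦃X' : C⦄, X' ∈ X → ∀ g : X' ⟶ B, ∃ h : X' ⟶ A, h ≫ f = g

/-- `α : A ⟶ X₀` is a left `X`-approximation of `A`: `X₀` lies in `X` and every
morphism from `A` to an object of `X` factors through `α`. -/
def IsLeftApprox (X : Set C) {A X₀ : C} (α : A ⟶ X₀) : Prop :=
  X₀ ∈ X ∧ IsXMonic X α

/-- `β : X₀ ⟶ B` is a right `X`-approximation of `B`: `X₀` lies in `X` and every
morphism from an object of `X` to `B` factors through `β`. -/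
def IsRightApprox (X : Set C) {X₀ B : C} (β : X₀ ⟶ B) : Prop :=
  X₀ ∈ X ∧ IsXEpic X β

/-- `X` is (the object class of) a full additive subcategory of `C`, closed
under isomorphisms, finite direct sums and direct summands. -/
structure IsAdditiveClosedSubcat [Preadditive C] [HasBinaryBiproducts C] (X : Set C) :
    Prop where
  zero_mem : ∀ Z : C, IsZero Z → Z ∈ X
  iso_closed : ∀ {A B : C}, (A ≅ B) → A ∈ X → B ∈ X
  sum_closed : ∀ {A B : C}, A ∈ X → B ∈ X → (A ⊞ B) ∈ X
  summand_closed : ∀ {A B : C}, (A ⊞ B) ∈ X → A ∈ X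

/-- Two morphisms are identified in the quotient category `C/X` precisely when
their difference factors through an object of `X`. -/
def xRel [Preadditive C] (X : Set C) : HomRel C :=
  fun _ _ f g => FactorsThru X (f - g)

/-- in a `k`-linear Hom-finite triangulated category with
Auslander–Reiten (Serre) duality and `τX = X`, for any distinguished triangle
`A --f--> B --g--> Z → A⟦1⟧`, `f` is `X`-monic if and only if `g` is `X`-epic. -/
theorem statement15 [Preadditive C] [HasZeroObject C] [HasShift C ℤ]
    [∀ n : ℤ, (shiftFunctor C n).Additive] [Pretriangulated C] [HasBinaryBiproducts C]
    (k : Type*) [Field k] [CategoryTheory.Linear k C]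
    [∀ A B : C, FiniteDimensional k (A ⟶ B)]
    (τ : C ⥤ C) [τ.Additive] [τ.IsEquivalence]
    (e : ∀ A B : C, (A ⟶ (B⟦(1 : ℤ)⟧)) ≃ₗ[k] ((B ⟶ τ.obj A) →ₗ[k] k))
    (he₁ : ∀ {A' A B : C} (f : A' ⟶ A) (φ : A ⟶ (B⟦(1 : ℤ)⟧)) (g : B ⟶ τ.obj A'),
      e A' B (f ≫ φ) g = e A B φ (g ≫ τ.map f))
    (he₂ : ∀ {A B B' : C} (h : B ⟶ B') (φ : A ⟶ (B⟦(1 : ℤ)⟧)) (g : B' ⟶ τ.obj A),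
      e A B' (φ ≫ (h⟦(1 : ℤ)⟧')) g = e A B φ (h ≫ g))
    (X : Set C) (hX : IsAdditiveClosedSubcat X)
    (hτ₁ : ∀ X' ∈ X, τ.obj X' ∈ X)
    (hτ₂ : ∀ X' ∈ X, ∃ Y ∈ X, Nonempty (τ.obj Y ≅ X'))
    {A B Z : C} (f : A ⟶ B) (g : B ⟶ Z) (δ : Z ⟶ (A⟦(1 : ℤ)⟧))
    (hT : Triangle.mk f g δ ∈ distTriang C) :
    IsXMonic X f ↔ IsXEpic X g := by
  -- `δ ≫ f⟦1⟧ = 0` from the rotated triangle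
  have hzero : δ ≫ (shiftFunctor C (1:ℤ)).map f = 0 := by
    have h := comp_distTriang_mor_zero₂₃ _ (rot_of_distTriang _ hT)
    dsimp [Triangle.rotate] at h
    change δ ≫ (-(shiftFunctor C (1:ℤ)).map f) = 0 at h
    rw [Preadditive.comp_neg, neg_eq_zero] at h
    exact h
  -- the key intermediate condition
  set K : Prop := ∀ h : A ⟶ τ.obj Z, FactorsThru X h → e Z A δ h = 0 with hK
  have keymonic : IsXMonic X f → K := by
    intro hf h ⟨M, u, v, hM, huv⟩
    obtain ⟨w, hw⟩ := hf hM u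
    have h1 : δ ≫ (shiftFunctor C (1:ℤ)).map u = 0 := by
      rw [← hw, Functor.map_comp, ← Category.assoc, hzero, zero_comp]
    calc e Z A δ h = e Z A δ (u ≫ v) := by rw [huv]
      _ = e Z M (δ ≫ (shiftFunctor C (1:ℤ)).map u) v := (he₂ u δ v).symm
      _ = 0 := by rw [h1, map_zero, LinearMap.zero_apply]
  have keyepic : IsXEpic X g → K := by
    intro hg h ⟨M, u, v, hM, huv⟩
    obtain ⟨Y, hY, ⟨ι⟩⟩ := hτ₂ M hM
    obtain ⟨ψ, hψ⟩ := τ.map_surjective (ι.hom ≫ v)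
    obtain ⟨w, hw⟩ := hg hY ψ
    have hψδ : ψ ≫ δ = 0 := by
      have h3 := comp_distTriang_mor_zero₂₃ _ hT
      change g ≫ δ = 0 at h3
      rw [← hw, Category.assoc, h3, comp_zero]
    have h2 := he₁ ψ δ (u ≫ ι.inv)
    rw [hψδ, map_zero, LinearMap.zero_apply, hψ] at h2
    rw [← huv]
    rw [Category.assoc, Iso.inv_hom_id_assoc] at h2
    exact h2.symm
  have toMonic : K → IsXMonic X f := by
    intro key X' hX' φ
    have hδφ : δ ≫ (shiftFunctor C (1:ℤ)).map φ = 0 := by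
      apply (e Z X').map_eq_zero_iff.mp
      ext gg
      rw [LinearMap.zero_apply, he₂ φ δ gg]
      exact key _ ⟨X', φ, gg, hX', rfl⟩
    obtain ⟨χ, hχ⟩ := Triangle.yoneda_exact₃ _ (rot_of_distTriang _ hT)
      ((shiftFunctor C (1:ℤ)).map φ) hδφ
    obtain ⟨h, rfl⟩ := (shiftFunctor C (1:ℤ)).map_surjective χ
    change B ⟶ X' at h
    refine ⟨-h, (shiftFunctor C (1:ℤ)).map_injective ?_⟩
    dsimp [Triangle.rotate] at hχ
    change (shiftFunctor C (1:ℤ)).map φ = (-(shiftFunctor C (1:ℤ)).map f) ≫ (shiftFunctor C (1:ℤ)).map h at hχ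
    rw [Functor.map_comp, Functor.map_neg, hχ]
    simp
  have toEpic : K → IsXEpic X g := by
    intro key X' hX' ψ
    have hψδ : ψ ≫ δ = 0 := by
      apply (e X' A).map_eq_zero_iff.mp
      ext gg
      rw [LinearMap.zero_apply, he₁ ψ δ gg]
      exact key _ ⟨τ.obj X', gg, τ.map ψ, hτ₁ X' hX', rfl⟩
    obtain ⟨w, hw⟩ := Triangle.coyoneda_exact₃ _ hT ψ hψδ
    exact ⟨w, hw.symm⟩
  exact ⟨fun h => toEpic (keymonic h), fun h => toMonic (keyepic h)⟩

end PaperStmt
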